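/- Let M be a compact, convex subset of a locally convex metrizable topological real vector space V, and let d* be a convex metric on V compatible with its topology. Let μ₀ be an extreme point of M. For every ε > 0 there exists γ > 0 such that for every Borel probability measure ξ on M with barycenter μ (i.e., φ(μ) = ∫_M φ(ν) dξ(ν) for every continuous linear functional φ on V), the implication holds: d*(μ, μ₀) < γ ⟹ ξ(M \ Ball(μ₀, ε)) < ε. -/

import Mathlib

open MeasureTheory

set_option linter.unusedSectionVars false
set_option maxHeartbeats 1000000

section Helpers

open Set

section Metric
variable {V : Type*} [TopologicalSpace V]
  (d : V → V → ℝ)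

theorem d_nonneg (hd_eq : ∀ a b : V, d a b = 0 ↔ a = b)
    (hd_symm : ∀ a b : V, d a b = d b a)
    (hd_tri : ∀ a b c : V, d a c ≤ d a b + d b c) (a b : V) : 0 ≤ d a b := by
  have h := hd_tri a b a
  rw [(hd_eq a a).mpr rfl, hd_symm b a] at h
  linarith

theorem ball_open (hd_tri : ∀ a b c : V, d a c ≤ d a b + d b c)
    (hd_top : ∀ (x : V) (s : Set V), s ∈ nhds x ↔ ∃ ε > 0, {y : V | d x y < ε} ⊆ s)
    (x : V) (r : ℝ) : IsOpen {y : V | d x y < r} := by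
  rw [isOpen_iff_mem_nhds]
  intro y hy
  rw [hd_top]
  refine ⟨r - d x y, by simpa using hy, fun z hz => ?_⟩
  have := hd_tri x y z
  simp only [mem_setOf_eq] at hz ⊢
  linarith

theorem d_t2 (hd_eq : ∀ a b : V, d a b = 0 ↔ a = b)
    (hd_symm : ∀ a b : V, d a b = d b a)
    (hd_tri : ∀ a b c : V, d a c ≤ d a b + d b c)
    (hd_top : ∀ (x : V) (s : Set V), s ∈ nhds x ↔ ∃ ε > 0, {y : V | d x y < ε} ⊆ s) :
    T2Space V := by
  constructor
  intro a b hab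
  have hr : 0 < d a b := by
    rcases lt_or_eq_of_le (d_nonneg d hd_eq hd_symm hd_tri a b) with h | h
    · exact h
    · exact absurd ((hd_eq a b).mp h.symm) hab
  refine ⟨{y | d a y < d a b / 2}, {y | d b y < d a b / 2},
    ball_open d hd_tri hd_top a _, ball_open d hd_tri hd_top b _, ?_, ?_, ?_⟩
  · simp only [mem_setOf_eq, (hd_eq a a).mpr rfl]; linarith
  · simp only [mem_setOf_eq, (hd_eq b b).mpr rfl]; linarith
  · rw [Set.disjoint_left]
    intro y hy1 hy2
    simp only [mem_setOf_eq] at hy1 hy2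
    have := hd_tri a y b
    rw [hd_symm y b] at this
    linarith

theorem d_cont (hd_symm : ∀ a b : V, d a b = d b a)
    (hd_tri : ∀ a b c : V, d a c ≤ d a b + d b c)
    (hd_top : ∀ (x : V) (s : Set V), s ∈ nhds x ↔ ∃ ε > 0, {y : V | d x y < ε} ⊆ s)
    (c : V) : Continuous (fun x : V => d x c) := by
  rw [continuous_iff_continuousAt]
  intro x₀
  rw [ContinuousAt, Metric.tendsto_nhds]
  intro δ hδ
  rw [Filter.eventually_iff, hd_top]
  refine ⟨δ, hδ, fun y hy => ?_⟩
  simp only [mem_setOf_eq] at hy ⊢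
  rw [Real.dist_eq, abs_lt]
  have h1 := hd_tri y x₀ c
  have h2 := hd_tri x₀ y c
  rw [hd_symm y x₀] at h1
  constructor <;> linarith

end Metric

section Convex
variable {V : Type*} [AddCommGroup V] [Module ℝ V] [TopologicalSpace V]
  [IsTopologicalAddGroup V] [ContinuousSMul ℝ V]

omit [TopologicalSpace V] [IsTopologicalAddGroup V] [ContinuousSMul ℝ V] in
theorem convexJoin_eq_image (s t : Set V) :
    convexJoin ℝ s t =
      (fun p : ℝ × V × V => p.1 • p.2.1 + (1 - p.1) • p.2.2) '' (Icc (0:ℝ) 1 ×ˢ s ×ˢ t) := by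
  ext x
  constructor
  · intro hx
    rw [mem_convexJoin] at hx
    obtain ⟨a, ha, b, hb, hab⟩ := hx
    obtain ⟨u, v, hu, hv, huv, hx⟩ := hab
    refine ⟨(u, a, b), ⟨⟨hu, by linarith⟩, ha, hb⟩, ?_⟩
    simp only
    rw [show (1:ℝ) - u = v by linarith]
    exact hx
  · rintro ⟨⟨u, a, b⟩, ⟨⟨hu0, hu1⟩, ha, hb⟩, rfl⟩
    rw [mem_convexJoin]
    exact ⟨a, ha, b, hb, u, 1 - u, hu0, by linarith, by ring, rfl⟩

theorem isCompact_convexJoin {s t : Set V} (hs : IsCompact s) (ht : IsCompact t) :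
    IsCompact (convexJoin ℝ s t) := by
  rw [convexJoin_eq_image]
  refine IsCompact.image (isCompact_Icc.prod (hs.prod ht)) ?_
  exact (continuous_fst.smul (continuous_snd.fst)).add
    ((continuous_const.sub continuous_fst).smul (continuous_snd.snd))

theorem isCompact_convexHull_biUnion {ι : Type*} (t : Finset ι) (K : ι → Set V) :
    t.Nonempty → (∀ i ∈ t, IsCompact (K i)) → (∀ i ∈ t, Convex ℝ (K i)) →
    (∀ i ∈ t, (K i).Nonempty) →
    IsCompact (convexHull ℝ (⋃ i ∈ t, K i)) := by
  classical
  induction t using Finset.cons_induction with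
  | empty => intro h; exact absurd h (by simp)
  | cons a s ha ih =>
    intro _ hcomp hconv hne
    rcases s.eq_empty_or_nonempty with rfl | hs
    · simp only [Finset.cons_empty, Finset.mem_singleton, iUnion_iUnion_eq_left]
      rw [(hconv a (by simp)).convexHull_eq]
      exact hcomp a (by simp)
    · have h1 : (⋃ i ∈ Finset.cons a s ha, K i) = K a ∪ ⋃ i ∈ s, K i := by
        simp [Finset.cons_eq_insert, Set.iUnion_union_distrib]
      rw [h1, convexHull_union (hne a (by simp)) ?_]
      · rw [(hconv a (by simp)).convexHull_eq]
        exact isCompact_convexJoin (hcomp a (by simp))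
          (ih hs (fun i hi => hcomp i (by simp [hi])) (fun i hi => hconv i (by simp [hi]))
            (fun i hi => hne i (by simp [hi])))
      · obtain ⟨i, hi⟩ := hs
        obtain ⟨x, hx⟩ := hne i (by simp [hi])
        exact ⟨x, mem_biUnion hi hx⟩

/-- Milman's theorem for a convex metric. -/
theorem milman (d : V → V → ℝ)
    (hd_eq : ∀ a b : V, d a b = 0 ↔ a = b)
    (hd_symm : ∀ a b : V, d a b = d b a)
    (hd_tri : ∀ a b c : V, d a c ≤ d a b + d b c)
    (hd_top : ∀ (x : V) (s : Set V), s ∈ nhds x ↔ ∃ ε > 0, {y : V | d x y < ε} ⊆ s)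
    (hd_convex : ∀ (a a' b b' : V) (t : ℝ), 0 ≤ t → t ≤ 1 →
      d (t • a + (1 - t) • b) (t • a' + (1 - t) • b') ≤ t * d a a' + (1 - t) * d b b')
    (K : Set V) (hK : IsCompact K)
    (hC : IsCompact (closure (convexHull ℝ K)))
    (μ₀ : V) (hext : μ₀ ∈ Set.extremePoints ℝ (closure (convexHull ℝ K))) : μ₀ ∈ K := by
  haveI : T2Space V := d_t2 d hd_eq hd_symm hd_tri hd_top
  by_contra hμK
  set C := closure (convexHull ℝ K) with hCdef
  have hμC : μ₀ ∈ C := hext.1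
  have hKne : K.Nonempty := by
    rcases K.eq_empty_or_nonempty with rfl | h
    · simp only [convexHull_empty, closure_empty, hCdef] at hμC
      exact hμC.elim
    · exact h
  -- minimal distance from μ₀ to K
  have hgcont : Continuous (fun x : V => d μ₀ x) := by
    have : (fun x : V => d μ₀ x) = fun x : V => d x μ₀ := by
      funext x; exact hd_symm μ₀ x
    rw [this]; exact d_cont d hd_symm hd_tri hd_top μ₀
  obtain ⟨x₀, hx₀K, hmin'⟩ := hK.exists_isMinOn hKne hgcont.continuousOn
  have hmin : ∀ y ∈ K, d μ₀ x₀ ≤ d μ₀ y := fun y hy => hmin' hy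
  set r := d μ₀ x₀ with hrdef
  have hr : 0 < r := by
    rcases lt_or_eq_of_le (d_nonneg d hd_eq hd_symm hd_tri μ₀ x₀) with h | h
    · exact h
    · exact absurd (((hd_eq μ₀ x₀).mp h.symm) ▸ hx₀K) hμK
  -- finite subcover by small balls
  obtain ⟨t, htK, hcover⟩ := hK.elim_nhds_subcover (fun x => {y | d x y < r/3})
    (fun x _ => (hd_top x _).mpr ⟨r/3, by linarith, subset_rfl⟩)
  set Kx : V → Set V := fun i => closure (convexHull ℝ (K ∩ {y | d i y < r/3})) with hKxdef
  have hKxC : ∀ i, Kx i ⊆ C := fun i =>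
    closure_mono (convexHull_mono inter_subset_left)
  have hKxcomp : ∀ i, IsCompact (Kx i) := fun i =>
    IsCompact.of_isClosed_subset hC isClosed_closure (hKxC i)
  have hKxconv : ∀ i, Convex ℝ (Kx i) := fun i => (convex_convexHull ℝ _).closure
  have hKxne : ∀ i ∈ t, (Kx i).Nonempty := by
    intro i hi
    refine ⟨i, subset_closure (subset_convexHull ℝ _ ⟨htK i hi, ?_⟩)⟩
    simp only [mem_setOf_eq, (hd_eq i i).mpr rfl]
    linarith
  have hμKx : ∀ i ∈ t, μ₀ ∉ Kx i := by
    intro i hi hmem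
    -- Kx i is inside the closed ball of radius r/3 around i
    have hballconv : Convex ℝ {y : V | d i y < r/3} := by
      intro a ha b hb ta tb hta htb htab
      have := hd_convex i a i b ta hta (by linarith)
      rw [show (1:ℝ) - ta = tb by linarith] at this
      rw [Convex.combo_self htab i] at this
      simp only [mem_setOf_eq] at ha hb ⊢
      calc d i (ta • a + tb • b) ≤ ta * d i a + tb * d i b := this
        _ < ta * (r/3) + tb * (r/3) := by
            rcases eq_or_lt_of_le hta with h | h
            · rcases eq_or_lt_of_le htb with h' | h'
              · exfalso; rw [← h, ← h'] at htab; simpa using htab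
              · rw [← h]; simpa using (mul_lt_mul_of_pos_left hb h')
            · rcases eq_or_lt_of_le htb with h' | h'
              · rw [← h']; simpa using (mul_lt_mul_of_pos_left ha h)
              · exact add_lt_add (mul_lt_mul_of_pos_left ha h) (mul_lt_mul_of_pos_left hb h')
        _ = r/3 := by rw [← add_mul, htab, one_mul]
    have hclosed : IsClosed {y : V | d i y ≤ r/3} := by
      have : {y : V | d i y ≤ r/3} = {y : V | (fun y => d y i) y ≤ r/3} := by
        ext y; simp only [mem_setOf_eq, hd_symm i y]
      rw [this]
      exact isClosed_le (d_cont d hd_symm hd_tri hd_top i) continuous_const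
    have hsub : Kx i ⊆ {y : V | d i y ≤ r/3} := by
      refine closure_minimal ?_ hclosed
      refine (convexHull_min (fun y hy => ?_) hballconv).trans (fun y (hy : d i y < r/3) => le_of_lt hy)
      exact hy.2
    have h1 : d i μ₀ ≤ r/3 := hsub hmem
    have h2 : r ≤ d μ₀ i := hmin i (htK i hi)
    rw [hd_symm μ₀ i] at h2
    linarith
  -- the convex hull of the union
  have htne : t.Nonempty := by
    obtain ⟨i, hi⟩ := mem_iUnion₂.mp (hcover hx₀K)
    exact ⟨i, hi.1⟩
  set D := convexHull ℝ (⋃ i ∈ t, Kx i) with hDdef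
  have hDcomp : IsCompact D :=
    isCompact_convexHull_biUnion t Kx htne (fun i _ => hKxcomp i) (fun i _ => hKxconv i) hKxne
  have hDC : D ⊆ C := convexHull_min (iUnion₂_subset fun i _ => hKxC i)
    ((convex_convexHull ℝ K).closure)
  have hCD : C ⊆ D := by
    refine closure_minimal (convexHull_min ?_ (convex_convexHull ℝ _)) hDcomp.isClosed
    intro x hx
    obtain ⟨i, hi, hxi⟩ := mem_iUnion₂.mp (hcover hx)
    exact subset_convexHull ℝ _ (mem_biUnion hi (subset_closure (subset_convexHull ℝ _ ⟨hx, hxi⟩)))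
  have hμD : μ₀ ∈ Set.extremePoints ℝ D := by
    refine ⟨hCD hμC, fun x₁ h₁ x₂ h₂ hseg => hext.2 (hDC h₁) (hDC h₂) hseg⟩
  have := extremePoints_convexHull_subset hμD
  obtain ⟨i, hi, hmem⟩ := mem_iUnion₂.mp this
  exact hμKx i hi hmem

end Convex


section Barycenter

open Set

variable {V : Type*} [AddCommGroup V] [Module ℝ V] [TopologicalSpace V]
  [IsTopologicalAddGroup V] [ContinuousSMul ℝ V] [LocallyConvexSpace ℝ V]
  [MeasurableSpace V] [BorelSpace V]

theorem exists_barycenter [T2Space V] (D : Set V) (hD : IsCompact D) (hDconv : Convex ℝ D)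
    (ρ : Measure V) [IsProbabilityMeasure ρ] (hρD : ρ D = 1) :
    ∃ a ∈ D, ∀ φ : V →L[ℝ] ℝ, φ a = ∫ x, φ x ∂ρ := by
  classical
  have hDmeas : MeasurableSet D := hD.isClosed.measurableSet
  have hrestr : ρ.restrict D = ρ := by
    apply Measure.restrict_eq_self_of_ae_mem
    have h0 : ρ Dᶜ = 0 := by
      rw [measure_compl hDmeas (measure_ne_top ρ D), hρD, measure_univ, tsub_self]
    exact (MeasureTheory.ae_iff).mpr (by simpa [Set.compl_def] using h0)
  have hint : ∀ φ : V →L[ℝ] ℝ, Integrable (fun x => φ x) ρ := by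
    intro φ
    rw [← hrestr]
    exact ContinuousOn.integrableOn_compact hD φ.continuous.continuousOn
  have key := hD.inter_iInter_nonempty (fun φ : V →L[ℝ] ℝ => {x | φ x = ∫ y, φ y ∂ρ})
    (fun φ => isClosed_eq φ.continuous continuous_const) ?_
  · obtain ⟨a, haD, ha⟩ := key
    exact ⟨a, haD, fun φ => by simpa using mem_iInter.mp ha φ⟩
  · intro u
    set T : V →L[ℝ] (u → ℝ) := ContinuousLinearMap.pi (fun φ : u => (φ : V →L[ℝ] ℝ)) with hT
    have hImcomp : IsCompact (T '' D) := hD.image T.continuous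
    have hImconv : Convex ℝ (T '' D) := by
      have := hDconv.linear_image (T : V →ₗ[ℝ] (u → ℝ))
      simpa using this
    set v : u → ℝ := fun φ => ∫ y, (φ : V →L[ℝ] ℝ) y ∂ρ with hv
    have hvIm : v ∈ T '' D := by
      by_contra hvIm
      obtain ⟨g, c, hgIm, hgv⟩ :=
        geometric_hahn_banach_closed_point hImconv hImcomp.isClosed hvIm
      set e : u → (u → ℝ) := fun i j => if i = j then 1 else 0 with he
      set w : u → ℝ := fun i => g (e i) with hw
      have hg : ∀ y : u → ℝ, g y = ∑ i, y i * w i := by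
        intro y
        conv_lhs => rw [pi_eq_sum_univ y, map_sum]
        congr 1
        funext i
        rw [ContinuousLinearMap.map_smul]
        simp [w, e, smul_eq_mul]
      have hTx : ∀ (x : V) (i : u), T x i = (i : V →L[ℝ] ℝ) x := fun x i => rfl
      have hkey : ∫ x, g (T x) ∂ρ = g v := by
        calc ∫ x, g (T x) ∂ρ = ∫ x, ∑ i : u, (i : V →L[ℝ] ℝ) x * w i ∂ρ := by
              congr 1; funext x; rw [hg]; simp [hTx]
          _ = ∑ i : u, ∫ x, (i : V →L[ℝ] ℝ) x * w i ∂ρ :=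
              integral_finset_sum _ (fun i _ => (hint i).mul_const _)
          _ = ∑ i : u, v i * w i := by
              congr 1; funext i; rw [integral_mul_const]
          _ = g v := (hg v).symm
      have hle : ∫ x, g (T x) ∂ρ ≤ c := by
        have h1 : ∫ x, g (T x) ∂ρ = ∫ x in D, g (T x) ∂ρ := by rw [hrestr]
        have h2 : ∫ x in D, g (T x) ∂ρ ≤ ∫ x in D, c ∂ρ := by
          apply setIntegral_mono_on
          · rw [IntegrableOn, hrestr]; exact hint (g.comp T)
          · exact integrableOn_const (by rw [hρD]; exact ENNReal.one_ne_top) enorm_ne_top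
          · exact hDmeas
          · exact fun x hx => le_of_lt (hgIm (T x) ⟨x, hx, rfl⟩)
        have h3 : ∫ x in D, (c : ℝ) ∂ρ = c := by
          rw [setIntegral_const, measureReal_def, hρD]; simp
        linarith
      linarith
    obtain ⟨a, haD, haT⟩ := hvIm
    refine ⟨a, haD, mem_iInter₂.mpr fun φ hφ => ?_⟩
    have := congrFun haT ⟨φ, hφ⟩
    simpa [T, v] using this

end Barycenter

end Helpers

section MainTheorem

open Set

theorem barycenter_mass_near_extreme_point
    {V : Type*} [AddCommGroup V] [Module ℝ V] [TopologicalSpace V]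
    [IsTopologicalAddGroup V] [ContinuousSMul ℝ V] [LocallyConvexSpace ℝ V]
    [MeasurableSpace V] [BorelSpace V]
    (d : V → V → ℝ)
    (hd_eq : ∀ a b : V, d a b = 0 ↔ a = b)
    (hd_symm : ∀ a b : V, d a b = d b a)
    (hd_tri : ∀ a b c : V, d a c ≤ d a b + d b c)
    (hd_top : ∀ (x : V) (s : Set V), s ∈ nhds x ↔ ∃ ε > 0, {y : V | d x y < ε} ⊆ s)
    (hd_convex : ∀ (a a' b b' : V) (t : ℝ), 0 ≤ t → t ≤ 1 →
      d (t • a + (1 - t) • b) (t • a' + (1 - t) • b') ≤ t * d a a' + (1 - t) * d b b')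
    (M : Set V) (hMcomp : IsCompact M) (hMconv : Convex ℝ M)
    (μ₀ : V) (hμ₀ : μ₀ ∈ Set.extremePoints ℝ M)
    (ε : ℝ) (hε : 0 < ε) :
    ∃ γ > 0, ∀ (ξ : Measure V) (μ : V),
      IsProbabilityMeasure ξ → ξ M = 1 →
      (∀ φ : V →L[ℝ] ℝ, φ μ = ∫ ν, φ ν ∂ξ) →
      d μ μ₀ < γ → (ξ (M \ {ν : V | d ν μ₀ < ε})).toReal < ε := by
  haveI hT2 : T2Space V := d_t2 d hd_eq hd_symm hd_tri hd_top
  have hμ₀M : μ₀ ∈ M := hμ₀.1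
  -- trivial case : ε > 1
  rcases le_or_gt ε 1 with hε1 | hε1
  swap
  · refine ⟨1, one_pos, fun ξ μ hprob _ _ _ => ?_⟩
    have h1 : ξ (M \ {ν : V | d ν μ₀ < ε}) ≤ 1 := prob_le_one
    have := ENNReal.toReal_mono ENNReal.one_ne_top h1
    simp only [ENNReal.toReal_one] at this
    linarith
  set B : Set V := {ν : V | d ν μ₀ < ε} with hBdef
  have hBopen : IsOpen B := by
    have : B = {ν : V | d μ₀ ν < ε} := by
      ext ν; simp only [hBdef, mem_setOf_eq, hd_symm μ₀ ν]
    rw [this]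
    exact ball_open d hd_tri hd_top μ₀ ε
  set K : Set V := M \ B with hKdef
  have hKclosed : IsClosed K := hMcomp.isClosed.sdiff hBopen
  have hKcomp : IsCompact K := hMcomp.of_isClosed_subset hKclosed diff_subset
  rcases K.eq_empty_or_nonempty with hKe | hKne
  · refine ⟨1, one_pos, fun ξ μ _ _ _ _ => ?_⟩
    rw [hKe]
    simpa using hε
  -- main case
  set C : Set V := closure (convexHull ℝ K) with hCdef
  have hKC : K ⊆ C := (subset_convexHull ℝ K).trans subset_closure
  have hCM : C ⊆ M := closure_minimal (convexHull_min diff_subset hMconv) hMcomp.isClosed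
  have hCcomp : IsCompact C := hMcomp.of_isClosed_subset isClosed_closure hCM
  have hCconv : Convex ℝ C := (convex_convexHull ℝ K).closure
  have hCne : C.Nonempty := hKne.mono hKC
  have hμ₀B : μ₀ ∈ B := by
    simp only [hBdef, mem_setOf_eq, (hd_eq μ₀ μ₀).mpr rfl]
    exact hε
  have hμ₀C : μ₀ ∉ C := by
    intro h
    have hext : μ₀ ∈ Set.extremePoints ℝ C :=
      ⟨h, fun x₁ hx₁ x₂ hx₂ hseg => hμ₀.2 (hCM hx₁) (hCM hx₂) hseg⟩
    have : μ₀ ∈ K := milman d hd_eq hd_symm hd_tri hd_top hd_convex K hKcomp hCcomp μ₀ hext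
    exact this.2 hμ₀B
  -- the compact set of suspicious combinations
  set f : ℝ × V × V → V := fun p => p.1 • p.2.1 + (1 - p.1) • p.2.2 with hfdef
  have hfcont : Continuous f := (continuous_fst.smul (continuous_snd.fst)).add
    ((continuous_const.sub continuous_fst).smul (continuous_snd.snd))
  set S : Set V := f '' (Icc ε 1 ×ˢ C ×ˢ M) with hSdef
  have hScomp : IsCompact S := (isCompact_Icc.prod (hCcomp.prod hMcomp)).image hfcont
  have hSne : S.Nonempty := by
    obtain ⟨c₀, hc₀⟩ := hCne
    exact ⟨f (1, c₀, μ₀), ⟨(1, c₀, μ₀), ⟨⟨hε1, le_refl 1⟩, hc₀, hμ₀M⟩, rfl⟩⟩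
  have hμ₀S : μ₀ ∉ S := by
    rintro ⟨p, hp, heq⟩
    obtain ⟨t, a, b⟩ := p
    simp only [Set.mem_prod, Set.mem_Icc] at hp
    obtain ⟨⟨htε, ht1⟩, haC, hbM⟩ := hp
    have heq' : t • a + (1 - t) • b = μ₀ := heq
    rcases eq_or_lt_of_le ht1 with h1 | h1
    · rw [h1] at heq'
      simp only [one_smul, sub_self, zero_smul, add_zero] at heq'
      exact hμ₀C (heq' ▸ haC)
    · have hseg : μ₀ ∈ openSegment ℝ a b :=
        ⟨t, 1 - t, lt_of_lt_of_le hε htε, by linarith, by ring, heq'⟩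
      have := hμ₀.2 (hCM haC) hbM hseg
      exact hμ₀C (this ▸ haC)
  obtain ⟨s₀, hs₀S, hs₀min⟩ :=
    hScomp.exists_isMinOn hSne (d_cont d hd_symm hd_tri hd_top μ₀).continuousOn
  set γ : ℝ := d s₀ μ₀ with hγdef
  have hγpos : 0 < γ := by
    rcases lt_or_eq_of_le (d_nonneg d hd_eq hd_symm hd_tri s₀ μ₀) with h | h
    · exact h
    · exact absurd (((hd_eq s₀ μ₀).mp h.symm) ▸ hs₀S) hμ₀S
  refine ⟨γ, hγpos, fun ξ μ hprob hξM hbar hdμ => ?_⟩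
  by_contra hcon
  push_neg at hcon
  -- measure-theoretic setup
  have hMmeas : MeasurableSet M := hMcomp.isClosed.measurableSet
  have hKmeas : MeasurableSet K := hKclosed.measurableSet
  set tR : ℝ := (ξ K).toReal with htRdef
  have hKfin : ξ K ≠ ⊤ := measure_ne_top ξ K
  have htR1 : tR ≤ 1 := by
    have := ENNReal.toReal_mono ENNReal.one_ne_top (prob_le_one (μ := ξ) (s := K))
    simpa using this
  have htRpos : 0 < tR := lt_of_lt_of_le hε hcon
  have hK0 : ξ K ≠ 0 := by
    intro h
    rw [htRdef, h] at htRpos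
    simp at htRpos
  have hrestrM : ξ.restrict M = ξ := by
    apply Measure.restrict_eq_self_of_ae_mem
    have h0 : ξ Mᶜ = 0 := by
      rw [measure_compl hMmeas (measure_ne_top ξ M), hξM, measure_univ, tsub_self]
    exact (MeasureTheory.ae_iff).mpr (by simpa [Set.compl_def] using h0)
  have hIntM : ∀ φ : V →L[ℝ] ℝ, IntegrableOn (fun x => φ x) M ξ := fun φ =>
    ContinuousOn.integrableOn_compact hMcomp φ.continuous.continuousOn
  -- barycenter of the restriction to K
  set ρ₁ : Measure V := (ξ K)⁻¹ • ξ.restrict K with hρ₁def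
  haveI hρ₁prob : IsProbabilityMeasure ρ₁ := by
    constructor
    rw [hρ₁def, Measure.smul_apply, Measure.restrict_apply MeasurableSet.univ, univ_inter,
      smul_eq_mul, ENNReal.inv_mul_cancel hK0 hKfin]
  have hρ₁C : ρ₁ C = 1 := by
    refine le_antisymm prob_le_one ?_
    have h1 : ρ₁ K = 1 := by
      rw [hρ₁def, Measure.smul_apply, Measure.restrict_apply hKmeas, inter_self,
        smul_eq_mul, ENNReal.inv_mul_cancel hK0 hKfin]
    rw [← h1]
    exact measure_mono hKC
  obtain ⟨a, haC, ha⟩ := exists_barycenter C hCcomp hCconv ρ₁ hρ₁C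
  have haK : ∀ φ : V →L[ℝ] ℝ, ∫ x in K, φ x ∂ξ = tR * φ a := by
    intro φ
    have h1 := ha φ
    rw [hρ₁def, integral_smul_measure, ENNReal.toReal_inv, smul_eq_mul] at h1
    have : tR * φ a = tR * (tR⁻¹ * ∫ x in K, φ x ∂ξ) := by rw [← h1]
    rw [this, ← mul_assoc, mul_inv_cancel₀ (ne_of_gt htRpos), one_mul]
  -- barycenter of the restriction to L
  set L : Set V := M \ K with hLdef
  have hLmeas : MeasurableSet L := hMmeas.diff hKmeas
  have hKM : K ⊆ M := diff_subset
  have hLval : ξ L = 1 - ξ K := by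
    rw [hLdef, measure_diff hKM hKmeas.nullMeasurableSet hKfin, hξM]
  have hLR : (ξ L).toReal = 1 - tR := by
    rw [hLval, ENNReal.toReal_sub_of_le prob_le_one ENNReal.one_ne_top, ENNReal.toReal_one]
  obtain ⟨b, hbM, hb⟩ : ∃ b ∈ M, ∀ φ : V →L[ℝ] ℝ, ∫ x in L, φ x ∂ξ = (1 - tR) * φ b := by
    rcases eq_or_ne (ξ L) 0 with hL0 | hL0
    · refine ⟨μ₀, hμ₀M, fun φ => ?_⟩
      have h1 : (1 : ℝ) - tR = 0 := by rw [← hLR, hL0]; simp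
      rw [Measure.restrict_eq_zero.mpr hL0, integral_zero_measure, h1, zero_mul]
    · set ρ₂ : Measure V := (ξ L)⁻¹ • ξ.restrict L with hρ₂def
      have hLfin : ξ L ≠ ⊤ := measure_ne_top ξ L
      haveI hρ₂prob : IsProbabilityMeasure ρ₂ := by
        constructor
        rw [hρ₂def, Measure.smul_apply, Measure.restrict_apply MeasurableSet.univ, univ_inter,
          smul_eq_mul, ENNReal.inv_mul_cancel hL0 hLfin]
      have hρ₂M : ρ₂ M = 1 := by
        refine le_antisymm prob_le_one ?_
        have h1 : ρ₂ L = 1 := by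
          rw [hρ₂def, Measure.smul_apply, Measure.restrict_apply hLmeas, inter_self,
            smul_eq_mul, ENNReal.inv_mul_cancel hL0 hLfin]
        rw [← h1]
        exact measure_mono diff_subset
      obtain ⟨b, hbM, hbb⟩ := exists_barycenter M hMcomp hMconv ρ₂ hρ₂M
      refine ⟨b, hbM, fun φ => ?_⟩
      have h1 := hbb φ
      rw [hρ₂def, integral_smul_measure, ENNReal.toReal_inv, smul_eq_mul] at h1
      have h2 : (ξ L).toReal ≠ 0 := by
        exact ENNReal.toReal_ne_zero.mpr ⟨hL0, hLfin⟩
      rw [← hLR]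
      have : (ξ L).toReal * φ b = (ξ L).toReal * (((ξ L).toReal)⁻¹ * ∫ x in L, φ x ∂ξ) := by
        rw [← h1]
      rw [this, ← mul_assoc, mul_inv_cancel₀ h2, one_mul]
  -- combine the two conditional barycenters
  have hcomb : ∀ φ : V →L[ℝ] ℝ, φ μ = φ (tR • a + (1 - tR) • b) := by
    intro φ
    rw [hbar φ]
    have hsplit : ∫ x, φ x ∂ξ = ∫ x in K, φ x ∂ξ + ∫ x in L, φ x ∂ξ := by
      conv_lhs => rw [← hrestrM, ← Set.union_diff_cancel hKM]
      exact setIntegral_union disjoint_sdiff_right hLmeas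
        ((hIntM φ).mono_set hKM) ((hIntM φ).mono_set diff_subset)
    rw [hsplit, haK φ, hb φ, map_add, ContinuousLinearMap.map_smul, ContinuousLinearMap.map_smul, smul_eq_mul, smul_eq_mul]
  have hμeq : μ = tR • a + (1 - tR) • b := by
    by_contra hne
    obtain ⟨φ, hφ⟩ := SeparatingDual.exists_separating_of_ne (R := ℝ) hne
    exact hφ (hcomb φ)
  have hμS : μ ∈ S := ⟨(tR, a, b), ⟨⟨hcon, htR1⟩, haC, hbM⟩, hμeq.symm⟩
  have hfin : d s₀ μ₀ ≤ d μ μ₀ := hs₀min hμS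
  rw [← hγdef] at hfin
  linarith

end MainTheorem
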